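/- Let λ > 0 and set α_n = (2 log n)^{-1/2} and β_n = (2 log n)^{1/2} - (log log n + log π) / (2 (2 log n)^{1/2}) for n ≥ 2. Then for every real x, (F_λ(α_n x + β_n))^n → Λ(x) as n → ∞. -/

import Mathlib

open Real MeasureTheory Filter Topology Set

/-- Standard normal density. -/
noncomputable def stdPhi (x : ℝ) : ℝ := (Real.sqrt (2 * Real.pi))⁻¹ * Real.exp (-(x ^ 2) / 2)

/-- Standard normal cdf. -/
noncomputable def stdCdf (x : ℝ) : ℝ := ∫ t in Set.Iic x, stdPhi t

/-- Skew normal density with shape parameter l. -/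
noncomputable def snPdf (l x : ℝ) : ℝ := 2 * stdPhi x * stdCdf (l * x)

/-- Skew normal cdf with shape parameter l. -/
noncomputable def snCdf (l x : ℝ) : ℝ := ∫ t in Set.Iic x, snPdf l t

/-- Gumbel extreme value distribution function. -/
noncomputable def gumbel (x : ℝ) : ℝ := Real.exp (-Real.exp (-x))

lemma stdPhi_pos (x : ℝ) : 0 < stdPhi x := by
  unfold stdPhi
  positivity

lemma stdPhi_eq (x : ℝ) : stdPhi x = (Real.sqrt (2 * Real.pi))⁻¹ * Real.exp (-(1/2) * x ^ 2) := by
  unfold stdPhi; ring_nf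

lemma stdPhi_continuous : Continuous stdPhi := by
  unfold stdPhi
  continuity

lemma stdPhi_integrable : Integrable stdPhi := by
  have h := (integrable_exp_neg_mul_sq (by norm_num : (0:ℝ) < 1/2)).const_mul
    ((Real.sqrt (2 * Real.pi))⁻¹)
  exact h.congr (Eventually.of_forall fun x => (stdPhi_eq x).symm)

lemma integral_stdPhi : ∫ x, stdPhi x = 1 := by
  have h : ∫ x, stdPhi x = (Real.sqrt (2 * Real.pi))⁻¹ * ∫ x : ℝ, Real.exp (-(1/2) * x ^ 2) := by
    rw [← integral_const_mul]
    exact integral_congr_ae (Eventually.of_forall fun x => stdPhi_eq x)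
  rw [h, integral_gaussian]
  have h2 : Real.pi / (1/2) = 2 * Real.pi := by ring
  rw [h2]
  rw [inv_mul_cancel₀ (by positivity : Real.sqrt (2*Real.pi) ≠ 0)]

lemma stdPhi_even (x : ℝ) : stdPhi (-x) = stdPhi x := by unfold stdPhi; ring_nf

lemma stdCdf_nonneg (x : ℝ) : 0 ≤ stdCdf x :=
  setIntegral_nonneg measurableSet_Iic fun t _ => (stdPhi_pos t).le

lemma stdCdf_le_one (x : ℝ) : stdCdf x ≤ 1 := by
  rw [← integral_stdPhi]
  exact setIntegral_le_integral stdPhi_integrable (Eventually.of_forall fun t => (stdPhi_pos t).le)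

lemma stdCdf_mono : Monotone stdCdf := fun a b hab =>
  setIntegral_mono_set stdPhi_integrable.integrableOn
    (Eventually.of_forall fun t => (stdPhi_pos t).le) (Eventually.of_forall (Iic_subset_Iic.2 hab))

lemma stdCdf_add_ioi (y : ℝ) : stdCdf y + ∫ t in Set.Ioi y, stdPhi t = 1 := by
  rw [← integral_stdPhi]
  exact intervalIntegral.integral_Iic_add_Ioi stdPhi_integrable.integrableOn stdPhi_integrable.integrableOn

lemma stdPhi_tendsto_zero : Tendsto stdPhi atTop (𝓝 0) := by
  have h1 : Tendsto (fun s : ℝ => -(s ^ 2) / 2) atTop atBot := by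
    apply Tendsto.atBot_div_const (by norm_num : (0:ℝ) < 2)
    exact tendsto_neg_atTop_atBot.comp (tendsto_pow_atTop two_ne_zero)
  have h2 : Tendsto (fun s : ℝ => Real.exp (-(s ^ 2) / 2)) atTop (𝓝 0) :=
    Real.tendsto_exp_atBot.comp h1
  have h3 := h2.const_mul ((Real.sqrt (2 * Real.pi))⁻¹)
  rw [mul_zero] at h3
  exact h3.congr fun s => rfl

lemma hasDerivAt_stdPhi (t : ℝ) : HasDerivAt stdPhi (-(t * stdPhi t)) t := by
  have h : HasDerivAt (fun s : ℝ => -(s ^ 2) / 2) (-t) t := by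
    have := ((hasDerivAt_pow 2 t).neg.div_const 2)
    exact this.congr_deriv (by ring)
  have h2 := (h.exp).const_mul ((Real.sqrt (2 * Real.pi))⁻¹)
  refine h2.congr_deriv ?_
  unfold stdPhi; ring

lemma integrable_mul_stdPhi : Integrable (fun t => t * stdPhi t) := by
  have h := (integrable_mul_exp_neg_mul_sq (by norm_num : (0:ℝ) < 1/2)).const_mul
    ((Real.sqrt (2 * Real.pi))⁻¹)
  refine h.congr (Eventually.of_forall fun t => ?_)
  unfold stdPhi; ring_nf

lemma integral_Ioi_mul_stdPhi (u : ℝ) : ∫ t in Ioi u, t * stdPhi t = stdPhi u := by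
  have hlim : Tendsto (fun s => -stdPhi s) atTop (𝓝 0) := by
    simpa using stdPhi_tendsto_zero.neg
  have h := integral_Ioi_of_hasDerivAt_of_tendsto' (f := fun s => -stdPhi s)
    (f' := fun t => t * stdPhi t) (a := u) (m := 0)
    (fun t _ => by have := (hasDerivAt_stdPhi t).neg; rw [neg_neg] at this; exact this)
    integrable_mul_stdPhi.integrableOn hlim
  rw [h]; ring

lemma mill_upper {u : ℝ} (hu : 0 < u) : ∫ t in Ioi u, stdPhi t ≤ stdPhi u / u := by
  have hg : IntegrableOn (fun t => u⁻¹ * (t * stdPhi t)) (Ioi u) :=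
    (integrable_mul_stdPhi.const_mul u⁻¹).integrableOn
  have h1 : ∫ t in Ioi u, stdPhi t ≤ ∫ t in Ioi u, u⁻¹ * (t * stdPhi t) := by
    refine setIntegral_mono_on stdPhi_integrable.integrableOn hg measurableSet_Ioi
      fun t ht => ?_
    have htu : u ≤ t := (le_of_lt ht)
    have h2 : 1 * stdPhi t ≤ (u⁻¹ * t) * stdPhi t := by
      apply mul_le_mul_of_nonneg_right _ (stdPhi_pos t).le
      rw [← div_eq_inv_mul]
      exact (one_le_div hu).2 htu
    calc stdPhi t = 1 * stdPhi t := by ring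
    _ ≤ (u⁻¹ * t) * stdPhi t := h2
    _ = u⁻¹ * (t * stdPhi t) := by ring
  rw [integral_const_mul, integral_Ioi_mul_stdPhi] at h1
  rw [div_eq_inv_mul]; exact h1

lemma mill_lower {u : ℝ} (hu : 2 ≤ u) :
    stdPhi u * (u⁻¹ - (u⁻¹) ^ 3) ≤ ∫ t in Ioi u, stdPhi t := by
  have hu0 : (0:ℝ) < u := by linarith
  have hderiv : ∀ t : ℝ, t ≠ 0 →
      HasDerivAt (fun t => stdPhi t * (t⁻¹ - (t⁻¹) ^ 3))
        (-(stdPhi t * (1 - 3 * (t⁻¹) ^ 4))) t := by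
    intro t ht
    have h3 := (hasDerivAt_stdPhi t).mul
      ((hasDerivAt_inv ht).sub ((hasDerivAt_inv ht).pow 3))
    refine h3.congr_deriv ?_
    simp only [Pi.sub_apply, Pi.pow_apply]
    push_cast
    field_simp
    ring
  have hint : IntegrableOn (fun t => -(stdPhi t * (1 - 3 * (t⁻¹) ^ 4))) (Ioi u) := by
    refine Integrable.mono (stdPhi_integrable.integrableOn) ?_ ?_
    · refine (AEMeasurable.aestronglyMeasurable ?_)
      exact ((stdPhi_continuous.measurable.mul
        ((measurable_inv.pow_const 4).const_mul 3 |>.const_sub 1)).neg).aemeasurable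
    · rw [ae_restrict_iff' measurableSet_Ioi]
      filter_upwards with t ht
      have ht2 : (2:ℝ) ≤ t := le_trans hu (le_of_lt ht)
      have ht0 : (0:ℝ) < t := by linarith
      have hb : 0 ≤ 3 * (t⁻¹) ^ 4 := by positivity
      have hb2 : 3 * (t⁻¹) ^ 4 ≤ 1 := by
        have hi : t⁻¹ ≤ 2⁻¹ := by
          rw [inv_le_inv₀ ht0 (by norm_num)]; exact ht2
        have h4 : (t⁻¹) ^ 4 ≤ (2⁻¹ : ℝ) ^ 4 :=
          pow_le_pow_left₀ (by positivity) hi 4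
        nlinarith
      have h0 : 0 ≤ stdPhi t * (1 - 3 * (t⁻¹) ^ 4) := by nlinarith [stdPhi_pos t]
      rw [norm_neg, Real.norm_eq_abs, Real.norm_eq_abs, abs_of_nonneg h0,
        abs_of_nonneg (stdPhi_pos t).le]
      nlinarith [stdPhi_pos t]
  have htend : Tendsto (fun t : ℝ => stdPhi t * (t⁻¹ - (t⁻¹) ^ 3)) atTop (𝓝 0) := by
    have h1 : Tendsto (fun t : ℝ => t⁻¹ - (t⁻¹) ^ 3) atTop (𝓝 (0 - 0 ^ 3)) :=
      (tendsto_inv_atTop_zero).sub ((tendsto_inv_atTop_zero).pow 3)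
    norm_num at h1
    have h2 := stdPhi_tendsto_zero.mul h1
    rw [zero_mul] at h2
    exact h2.congr fun t => by ring
  have heq := integral_Ioi_of_hasDerivAt_of_tendsto'
    (f := fun t => stdPhi t * (t⁻¹ - (t⁻¹) ^ 3))
    (f' := fun t => -(stdPhi t * (1 - 3 * (t⁻¹) ^ 4))) (a := u) (m := 0)
    (fun t ht => hderiv t (by intro h; rw [h] at ht; simp at ht; linarith))
    hint htend
  have heq2 : ∫ t in Ioi u, stdPhi t * (1 - 3 * (t⁻¹) ^ 4)
      = stdPhi u * (u⁻¹ - (u⁻¹) ^ 3) := by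
    rw [integral_neg] at heq
    linarith
  rw [← heq2]
  refine setIntegral_mono_on (hint.neg.congr ?_) stdPhi_integrable.integrableOn
    measurableSet_Ioi fun t ht => ?_
  · filter_upwards with t; simp only [Pi.neg_apply]; ring
  · have ht0 : (0:ℝ) < t := lt_trans hu0 ht
    have hb : 0 ≤ 3 * (t⁻¹) ^ 4 := by positivity
    nlinarith [stdPhi_pos t]

lemma stdCdf_tendsto_one : Tendsto stdCdf atTop (𝓝 1) := by
  have h0 : Tendsto (fun y : ℝ => 1 - stdPhi y / y) atTop (𝓝 1) := by
    have h1 := stdPhi_tendsto_zero.mul (tendsto_inv_atTop_zero (𝕜 := ℝ))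
    rw [mul_zero] at h1
    have h2 := (tendsto_const_nhds (x := (1:ℝ)) (f := atTop)).sub h1
    rw [sub_zero] at h2
    exact h2.congr fun y => by rw [div_eq_mul_inv]
  refine tendsto_of_tendsto_of_tendsto_of_le_of_le' h0 tendsto_const_nhds ?_ ?_
  · filter_upwards [eventually_gt_atTop (0:ℝ)] with y hy
    have h3 := mill_upper hy
    have h4 := stdCdf_add_ioi y
    linarith
  · filter_upwards with y; exact stdCdf_le_one y

lemma stdCdf_measurable : Measurable stdCdf := stdCdf_mono.measurable

lemma snPdf_measurable (l : ℝ) : Measurable (snPdf l) := by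
  unfold snPdf
  exact ((stdPhi_continuous.measurable.const_mul 2).mul
    (stdCdf_measurable.comp (measurable_id.const_mul l)))

lemma snPdf_nonneg (l x : ℝ) : 0 ≤ snPdf l x :=
  mul_nonneg (mul_nonneg (by norm_num) (stdPhi_pos x).le) (stdCdf_nonneg _)

lemma snPdf_le (l x : ℝ) : snPdf l x ≤ 2 * stdPhi x := by
  unfold snPdf
  nlinarith [stdPhi_pos x, stdCdf_le_one (l * x), stdCdf_nonneg (l * x)]

lemma snPdf_integrable (l : ℝ) : Integrable (snPdf l) := by
  refine Integrable.mono (stdPhi_integrable.const_mul 2)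
    (snPdf_measurable l).aestronglyMeasurable ?_
  filter_upwards with x
  rw [Real.norm_eq_abs, Real.norm_eq_abs, abs_of_nonneg (snPdf_nonneg l x),
    abs_of_nonneg (mul_nonneg (by norm_num) (stdPhi_pos x).le)]
  exact snPdf_le l x

lemma stdCdf_neg (y : ℝ) : stdCdf (-y) = ∫ t in Ioi y, stdPhi t := by
  have h := integral_comp_neg_Iic (-y) stdPhi
  rw [neg_neg] at h
  have h2 : (∫ x in Iic (-y), stdPhi (-x)) = ∫ x in Iic (-y), stdPhi x :=
    integral_congr_ae (Eventually.of_forall fun x => stdPhi_even x)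
  rw [h2] at h
  exact h

lemma stdCdf_add_neg (y : ℝ) : stdCdf y + stdCdf (-y) = 1 := by
  rw [stdCdf_neg]; exact stdCdf_add_ioi y

lemma integral_snPdf (l : ℝ) : ∫ x, snPdf l x = 1 := by
  have hneg : Integrable (fun x => snPdf l (-x)) := (snPdf_integrable l).comp_neg
  have hJ : (∫ x, snPdf l (-x)) = ∫ x, snPdf l x := integral_neg_eq_self _ _
  have hadd : (∫ x, (snPdf l x + snPdf l (-x))) = (∫ x, snPdf l x) + ∫ x, snPdf l (-x) :=
    integral_add (snPdf_integrable l) hneg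
  have hkey : ∀ x, snPdf l x + snPdf l (-x) = 2 * stdPhi x := by
    intro x
    unfold snPdf
    rw [stdPhi_even]
    have hx : l * -x = -(l * x) := by ring
    rw [hx]
    have h1 := stdCdf_add_neg (l * x)
    linear_combination (2 * stdPhi x) * h1
  have h2 : (∫ x, (snPdf l x + snPdf l (-x))) = 2 := by
    rw [integral_congr_ae (Eventually.of_forall hkey), integral_const_mul, integral_stdPhi]
    norm_num
  rw [hadd, hJ] at h2
  linarith

lemma snCdf_add_ioi (l u : ℝ) : snCdf l u + ∫ t in Ioi u, snPdf l t = 1 := by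
  rw [← integral_snPdf l]
  exact intervalIntegral.integral_Iic_add_Ioi (snPdf_integrable l).integrableOn
    (snPdf_integrable l).integrableOn

lemma snTail_le (l : ℝ) {u : ℝ} (hu : 0 < u) :
    ∫ t in Ioi u, snPdf l t ≤ 2 * (stdPhi u / u) := by
  have h1 : ∫ t in Ioi u, snPdf l t ≤ ∫ t in Ioi u, 2 * stdPhi t :=
    setIntegral_mono_on (snPdf_integrable l).integrableOn
      ((stdPhi_integrable.const_mul 2).integrableOn) measurableSet_Ioi
      fun t _ => snPdf_le l t
  rw [integral_const_mul] at h1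
  have h2 := mill_upper hu
  linarith

lemma le_snTail {l u : ℝ} (hl : 0 < l) (hu : 2 ≤ u) :
    2 * (stdPhi u / u) * (stdCdf (l * u) * (1 - (u⁻¹) ^ 2)) ≤ ∫ t in Ioi u, snPdf l t := by
  have hu0 : (0:ℝ) < u := by linarith
  have h1 : ∫ t in Ioi u, stdCdf (l * u) * (2 * stdPhi t) ≤ ∫ t in Ioi u, snPdf l t := by
    refine setIntegral_mono_on (((stdPhi_integrable.const_mul 2).const_mul _).integrableOn)
      (snPdf_integrable l).integrableOn measurableSet_Ioi fun t ht => ?_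
    have hmono : stdCdf (l * u) ≤ stdCdf (l * t) :=
      stdCdf_mono (mul_le_mul_of_nonneg_left (le_of_lt ht) hl.le)
    unfold snPdf
    nlinarith [stdPhi_pos t, stdCdf_nonneg (l * u)]
  rw [integral_const_mul] at h1
  have h2 := mill_lower hu
  have key : 2 * (stdPhi u / u) * (stdCdf (l * u) * (1 - (u⁻¹) ^ 2))
      = stdCdf (l * u) * (2 * (stdPhi u * (u⁻¹ - (u⁻¹) ^ 3))) := by
    field_simp
  rw [key]
  have h4 : stdCdf (l * u) * (2 * (stdPhi u * (u⁻¹ - (u⁻¹) ^ 3)))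
      ≤ stdCdf (l * u) * (2 * ∫ t in Ioi u, stdPhi t) := by
    nlinarith [stdCdf_nonneg (l * u)]
  have h5 : stdCdf (l * u) * (2 * ∫ t in Ioi u, stdPhi t)
      = stdCdf (l * u) * ∫ t in Ioi u, 2 * stdPhi t := by
    rw [integral_const_mul]
  linarith [h1, h4, h5.le, h5.ge]

noncomputable def sN (n : ℕ) : ℝ := Real.sqrt (2 * Real.log n)
noncomputable def cN (n : ℕ) : ℝ := (Real.log (Real.log n) + Real.log Real.pi) / 2
noncomputable def uN (x : ℝ) (n : ℕ) : ℝ :=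
  (sN n)⁻¹ * x + (sN n - (Real.log (Real.log n) + Real.log Real.pi) / (2 * sN n))
noncomputable def dN (x : ℝ) (n : ℕ) : ℝ := (x - cN n) / sN n

lemma sqrt_tendsto_atTop : Tendsto Real.sqrt atTop atTop :=
  (tendsto_rpow_atTop (by norm_num : (0:ℝ) < 1/2)).congr fun x => (Real.sqrt_eq_rpow x).symm

lemma logN_tendsto : Tendsto (fun n : ℕ => Real.log n) atTop atTop :=
  Real.tendsto_log_atTop.comp tendsto_natCast_atTop_atTop

lemma sN_tendsto : Tendsto sN atTop atTop :=
  sqrt_tendsto_atTop.comp (logN_tendsto.const_mul_atTop (by norm_num : (0:ℝ) < 2))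

lemma log_div_sqrt_tendsto : Tendsto (fun y : ℝ => Real.log y / Real.sqrt y) atTop (𝓝 0) := by
  have h := (isLittleO_log_rpow_atTop (by norm_num : (0:ℝ) < 1/2)).tendsto_div_nhds_zero
  exact h.congr fun y => by rw [Real.sqrt_eq_rpow]

lemma dN_tendsto (x : ℝ) : Tendsto (dN x) atTop (𝓝 0) := by
  have hf : Tendsto (fun y : ℝ =>
      (x - Real.log Real.pi / 2) * (Real.sqrt (2 * y))⁻¹
        - (Real.sqrt 2)⁻¹ / 2 * (Real.log y / Real.sqrt y)) atTop (𝓝 0) := by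
    have h1 : Tendsto (fun y : ℝ => (Real.sqrt (2 * y))⁻¹) atTop (𝓝 0) :=
      tendsto_inv_atTop_zero.comp
        (sqrt_tendsto_atTop.comp (tendsto_id.const_mul_atTop (by norm_num : (0:ℝ) < 2)))
    have h2 := (h1.const_mul (x - Real.log Real.pi / 2)).sub
      (log_div_sqrt_tendsto.const_mul ((Real.sqrt 2)⁻¹ / 2))
    simpa using h2
  have hcomp := hf.comp logN_tendsto
  refine hcomp.congr' ?_
  have hev : ∀ᶠ n : ℕ in atTop, 1 ≤ Real.log n :=
    logN_tendsto.eventually (eventually_ge_atTop 1)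
  filter_upwards [hev] with n hn
  have hL : (0:ℝ) < Real.log n := by linarith
  have hs : Real.sqrt (2 * Real.log n) = Real.sqrt 2 * Real.sqrt (Real.log n) :=
    Real.sqrt_mul (by norm_num) _
  have hs2 : (0:ℝ) < Real.sqrt 2 := by positivity
  have hsL : (0:ℝ) < Real.sqrt (Real.log n) := Real.sqrt_pos.2 hL
  show (x - Real.log Real.pi / 2) * (Real.sqrt (2 * Real.log n))⁻¹
      - (Real.sqrt 2)⁻¹ / 2 * (Real.log (Real.log n) / Real.sqrt (Real.log n))
    = dN x n
  unfold dN cN sN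
  rw [hs]
  field_simp
  ring

lemma uN_eq (x : ℝ) (n : ℕ) (hs : sN n ≠ 0) : uN x n = sN n + dN x n := by
  unfold uN dN cN
  field_simp
  ring

lemma uN_tendsto (x : ℝ) : Tendsto (uN x) atTop atTop := by
  have h := sN_tendsto.atTop_add (dN_tendsto x)
  refine h.congr' ?_
  filter_upwards [sN_tendsto.eventually (eventually_ge_atTop 1)] with n hn
  exact (uN_eq x n (by linarith)).symm

lemma ratio_tendsto (x : ℝ) : Tendsto (fun n => sN n / uN x n) atTop (𝓝 1) := by
  have hds : Tendsto (fun n => dN x n / sN n) atTop (𝓝 0) := by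
    have := (dN_tendsto x).mul (tendsto_inv_atTop_zero.comp sN_tendsto)
    rw [mul_zero] at this
    exact this.congr fun n => (div_eq_mul_inv _ _).symm
  have h1 : Tendsto (fun n => (1 + dN x n / sN n)⁻¹) atTop (𝓝 1) := by
    have h2 := ((tendsto_const_nhds (x := (1:ℝ)) (f := atTop)).add hds).inv₀ (by norm_num)
    norm_num at h2
    exact h2
  refine h1.congr' ?_
  filter_upwards [sN_tendsto.eventually (eventually_ge_atTop 1)] with n hn
  have hs : sN n ≠ 0 := by linarith
  rw [uN_eq x n hs]
  rw [show (1 : ℝ) + dN x n / sN n = (sN n + dN x n) / sN n by field_simp]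
  rw [inv_div]

lemma exp_half_log {y : ℝ} (hy : 0 < y) : Real.exp (Real.log y / 2) = Real.sqrt y := by
  rw [← Real.log_sqrt hy.le, Real.exp_log (Real.sqrt_pos.2 hy)]

lemma key_identity (x : ℝ) (n : ℕ) (hL : 1 < Real.log n) (hn0 : 0 < (n:ℝ))
    (hu : 0 < uN x n) :
    (n:ℝ) * (2 * stdPhi (uN x n) / uN x n)
      = Real.exp (-x) * Real.exp (-(dN x n ^ 2 / 2)) * (sN n / uN x n) := by
  have hL0 : (0:ℝ) < Real.log n := by linarith
  have hs2 : sN n ^ 2 = 2 * Real.log n := Real.sq_sqrt (by positivity)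
  have hs : (0:ℝ) < sN n := Real.sqrt_pos.2 (by positivity)
  have hueq : uN x n = sN n + dN x n := uN_eq x n hs.ne'
  have hsd : sN n * dN x n = x - cN n := by
    unfold dN; field_simp
  have hu2 : -(uN x n ^ 2) / 2
      = -Real.log n + (-(x - cN n)) + (-(dN x n ^ 2 / 2)) := by
    rw [hueq]
    have : (sN n + dN x n) ^ 2 = sN n ^ 2 + 2 * (sN n * dN x n) + dN x n ^ 2 := by ring
    rw [this, hs2, hsd]
    ring
  have hexp : Real.exp (-(uN x n ^ 2) / 2)
      = (n:ℝ)⁻¹ * (Real.exp (-x) * (Real.sqrt (Real.log n) * Real.sqrt Real.pi))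
        * Real.exp (-(dN x n ^ 2 / 2)) := by
    have e1 : Real.exp (-Real.log n) = (n:ℝ)⁻¹ := by
      rw [Real.exp_neg, Real.exp_log hn0]
    have e2 : Real.exp (-(x - cN n))
        = Real.exp (-x) * (Real.sqrt (Real.log n) * Real.sqrt Real.pi) := by
      have hc : -(x - cN n) = -x + (Real.log (Real.log n) / 2 + Real.log Real.pi / 2) := by
        unfold cN; ring
      rw [hc]
      rw [Real.exp_add]
      rw [Real.exp_add]
      rw [exp_half_log hL0]
      rw [exp_half_log Real.pi_pos]
    rw [hu2]
    rw [Real.exp_add]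
    rw [Real.exp_add]
    rw [e1]
    rw [e2]
  have hsqrt2pi : Real.sqrt (2 * Real.pi) = Real.sqrt 2 * Real.sqrt Real.pi :=
    Real.sqrt_mul (by norm_num) _
  have hsN : sN n = Real.sqrt 2 * Real.sqrt (Real.log n) := by
    unfold sN; exact Real.sqrt_mul (by norm_num) _
  have ha : (0:ℝ) < Real.sqrt 2 := by positivity
  have hb : (0:ℝ) < Real.sqrt Real.pi := Real.sqrt_pos.2 Real.pi_pos
  have haa : Real.sqrt 2 * Real.sqrt 2 = 2 := Real.mul_self_sqrt (by norm_num)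
  unfold stdPhi
  rw [hexp, hsqrt2pi, hsN]
  field_simp
  ring_nf
  rw [Real.sq_sqrt (by norm_num : (0:ℝ) ≤ 2)]

lemma B_tendsto (x : ℝ) :
    Tendsto (fun n : ℕ => (n:ℝ) * (2 * stdPhi (uN x n) / uN x n)) atTop
      (𝓝 (Real.exp (-x))) := by
  have hE : Tendsto (fun n => Real.exp (-(dN x n ^ 2 / 2))) atTop (𝓝 1) := by
    have h1 : Tendsto (fun n => -(dN x n ^ 2 / 2)) atTop (𝓝 (0:ℝ)) := by
      have h0 := ((dN_tendsto x).pow 2).div_const 2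
      norm_num at h0
      have h2 := h0.neg
      rw [neg_zero] at h2
      exact h2
    have := (Real.continuous_exp.tendsto 0).comp h1; rw [Real.exp_zero] at this; exact this
  have hmain := ((tendsto_const_nhds (x := Real.exp (-x)) (f := atTop)).mul hE).mul
    (ratio_tendsto x)
  rw [mul_one, mul_one] at hmain
  refine hmain.congr' ?_
  filter_upwards [logN_tendsto.eventually (eventually_gt_atTop 1),
    (uN_tendsto x).eventually (eventually_gt_atTop 0),
    eventually_gt_atTop 0] with n h1 h2 h3
  exact (key_identity x n h1 (by exact_mod_cast h3) h2).symm

lemma pow_limit (T : ℕ → ℝ) (c : ℝ)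
    (hT : Tendsto (fun n : ℕ => (n:ℝ) * T n) atTop (𝓝 c))
    (hpos : ∀ᶠ n in atTop, 0 < T n) :
    Tendsto (fun n : ℕ => (1 - T n) ^ n) atTop (𝓝 (Real.exp (-c))) := by
  have hT0 : Tendsto T atTop (𝓝 0) := by
    have h := hT.mul tendsto_inv_atTop_nhds_zero_nat
    rw [mul_zero] at h
    refine h.congr' ?_
    filter_upwards [eventually_gt_atTop 0] with n hn
    have hne : ((n:ℝ)) ≠ 0 := (Nat.cast_pos.2 hn).ne'
    field_simp
  have hslope : Tendsto (fun t : ℝ => Real.log (1 - t) / t) (𝓝[≠] 0) (𝓝 (-1)) := by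
    have hd : HasDerivAt (fun t : ℝ => Real.log (1 - t)) (-1) 0 := by
      have h1 : HasDerivAt (fun t : ℝ => 1 - t) (-1) 0 := by
        simpa using (hasDerivAt_id (0:ℝ)).const_sub 1
      have h2 := h1.log (by norm_num : (1:ℝ) - 0 ≠ 0)
      simpa using h2
    have h3 := hasDerivAt_iff_tendsto_slope.1 hd
    refine h3.congr fun t => ?_
    simp [slope, Real.log_one, div_eq_inv_mul]
  have hTne : Tendsto T atTop (𝓝[≠] 0) :=
    tendsto_nhdsWithin_of_tendsto_nhds_of_eventually_within _ hT0
      (hpos.mono fun n hn => ne_of_gt hn)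
  have h2 : Tendsto (fun n => Real.log (1 - T n) / T n) atTop (𝓝 (-1)) :=
    hslope.comp hTne
  have h3 := hT.mul h2
  rw [mul_neg_one] at h3
  have h4 : Tendsto (fun n : ℕ => (n:ℝ) * Real.log (1 - T n)) atTop (𝓝 (-c)) := by
    refine h3.congr' ?_
    filter_upwards [hpos] with n hn
    have hne : T n ≠ 0 := ne_of_gt hn
    field_simp
  have h5 := (Real.continuous_exp.tendsto _).comp h4
  refine h5.congr' ?_
  filter_upwards [hT0.eventually_lt_const (by norm_num : (0:ℝ) < 1)] with n hn
  have h1T : 0 < 1 - T n := by linarith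
  show Real.exp ((n:ℝ) * Real.log (1 - T n)) = (1 - T n) ^ n
  rw [← Real.log_pow, Real.exp_log (pow_pos h1T n)]

theorem skew_normal_max_gumbel_pos (l : ℝ) (hl : 0 < l) (x : ℝ) :
    Tendsto (fun n : ℕ =>
      (snCdf l ((Real.sqrt (2 * Real.log n))⁻¹ * x +
        (Real.sqrt (2 * Real.log n) -
          (Real.log (Real.log n) + Real.log Real.pi) /
            (2 * Real.sqrt (2 * Real.log n))))) ^ n) atTop (𝓝 (gumbel x)) := by
  have hueq : ∀ n : ℕ, (Real.sqrt (2 * Real.log n))⁻¹ * x +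
      (Real.sqrt (2 * Real.log n) -
        (Real.log (Real.log n) + Real.log Real.pi) /
          (2 * Real.sqrt (2 * Real.log n))) = uN x n := fun n => rfl
  set T : ℕ → ℝ := fun n => ∫ t in Ioi (uN x n), snPdf l t with hTdef
  have hPhiC : Tendsto (fun n => stdCdf (l * uN x n)) atTop (𝓝 1) :=
    stdCdf_tendsto_one.comp ((uN_tendsto x).const_mul_atTop hl)
  have huinv : Tendsto (fun n => (1 - ((uN x n)⁻¹) ^ 2)) atTop (𝓝 1) := by
    have h0 := ((tendsto_inv_atTop_zero.comp (uN_tendsto x)).pow 2).const_sub 1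
    norm_num at h0
    exact h0.congr fun k => by ring
  have hu2 : ∀ᶠ n in atTop, 2 ≤ uN x n :=
    (uN_tendsto x).eventually (eventually_ge_atTop 2)
  have key : Tendsto (fun n : ℕ => (n:ℝ) * T n) atTop (𝓝 (Real.exp (-x))) := by
    have hlow : Tendsto (fun n : ℕ => ((n:ℝ) * (2 * stdPhi (uN x n) / uN x n))
        * (stdCdf (l * uN x n) * (1 - ((uN x n)⁻¹) ^ 2))) atTop (𝓝 (Real.exp (-x))) := by
      have h := (B_tendsto x).mul (hPhiC.mul huinv)
      rw [mul_one, mul_one] at h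
      exact h
    refine tendsto_of_tendsto_of_tendsto_of_le_of_le' hlow (B_tendsto x) ?_ ?_
    · filter_upwards [hu2] with n hn
      have h1 := le_snTail hl hn
      have hn0 : (0:ℝ) ≤ (n:ℝ) := Nat.cast_nonneg n
      have h2 := mul_le_mul_of_nonneg_left h1 hn0
      calc ((n:ℝ) * (2 * stdPhi (uN x n) / uN x n))
            * (stdCdf (l * uN x n) * (1 - ((uN x n)⁻¹) ^ 2))
          = (n:ℝ) * (2 * (stdPhi (uN x n) / uN x n)
            * (stdCdf (l * uN x n) * (1 - ((uN x n)⁻¹) ^ 2))) := by ring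
        _ ≤ (n:ℝ) * T n := h2
    · filter_upwards [hu2] with n hn
      have h1 := snTail_le l (u := uN x n) (by linarith)
      have hn0 : (0:ℝ) ≤ (n:ℝ) := Nat.cast_nonneg n
      have h2 := mul_le_mul_of_nonneg_left h1 hn0
      calc (n:ℝ) * T n ≤ (n:ℝ) * (2 * (stdPhi (uN x n) / uN x n)) := h2
        _ = (n:ℝ) * (2 * stdPhi (uN x n) / uN x n) := by ring
  have hpos : ∀ᶠ n in atTop, 0 < T n := by
    filter_upwards [hu2, hPhiC.eventually_const_lt (by norm_num : (1:ℝ)/2 < 1)]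
      with n hn hc
    have hu0 : (0:ℝ) < uN x n := by linarith
    have hinv : ((uN x n)⁻¹) ^ 2 < 1 := by
      have : (uN x n)⁻¹ ≤ 2⁻¹ := by
        rw [inv_le_inv₀ hu0 (by norm_num)]; exact hn
      have h4 : ((uN x n)⁻¹) ^ 2 ≤ (2⁻¹:ℝ) ^ 2 :=
        pow_le_pow_left₀ (by positivity) this 2
      nlinarith
    have hlb := le_snTail hl hn
    have hq : 0 < stdPhi (uN x n) / uN x n := div_pos (stdPhi_pos _) hu0
    have hc0 : 0 < stdCdf (l * uN x n) := by linarith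
    have h1m : 0 < 1 - ((uN x n)⁻¹) ^ 2 := by linarith
    have hposx : 0 < 2 * (stdPhi (uN x n) / uN x n)
        * (stdCdf (l * uN x n) * (1 - ((uN x n)⁻¹) ^ 2)) := by
      have heq : 2 * (stdPhi (uN x n) / uN x n)
          * (stdCdf (l * uN x n) * (1 - ((uN x n)⁻¹) ^ 2))
          = ((2 * (stdPhi (uN x n) / uN x n)) * stdCdf (l * uN x n))
            * (1 - ((uN x n)⁻¹) ^ 2) := by ring
      rw [heq]
      exact mul_pos (mul_pos (mul_pos two_pos hq) hc0) h1m
    linarith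
  have hfin := pow_limit T (Real.exp (-x)) key hpos
  have hsn : ∀ n : ℕ, snCdf l (uN x n) = 1 - T n := fun n => by
    have h := snCdf_add_ioi l (uN x n)
    simp only [hTdef]
    linarith
  have hg : gumbel x = Real.exp (-(Real.exp (-x))) := rfl
  rw [hg]
  refine hfin.congr fun n => ?_
  show (1 - T n) ^ n = (snCdf l (uN x n)) ^ n
  rw [hsn n]
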